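/- Let C be a triangulated category and T a contravariantly finite rigid full subcategory, with weak equivalences W defined as morphisms whose connecting maps in a triangle factor through T^⊥. If a morphism p : X → Y has the right lifting property with respect to all morphisms in I (where I consists of morphisms T' → B with T' in T and B in T * ΣT), then p is a weak equivalence and has the right lifting property with respect to {0 → ΣT' : T' ∈ T}; conversely, every morphism that is both in J^□ (J = {0 → ΣT'}) and in W has the right lifting property with respect to all of I. -/

import Mathlib

open CategoryTheory CategoryTheory.Limits CategoryTheory.Pretriangulated

variable {C : Type*} [Category C] [Preadditive C] [HasZeroObject C]
  [HasShift C ℤ] [∀ n : ℤ, Functor.Additive (CategoryTheory.shiftFunctor C n)]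
  [Pretriangulated C]

/-- `f` factors through an object of the set `S`. -/
def FactorsThruSet (S : Set C) {X Y : C} (f : X ⟶ Y) : Prop :=
  ∃ U ∈ S, ∃ (a : X ⟶ U) (b : U ⟶ Y), f = a ≫ b

/-- The right perpendicular subcategory `T^⊥` of a full subcategory `T`. -/
def rperp (T : Set C) : Set C := {Z | ∀ T' ∈ T, ∀ (f : T' ⟶ Z), f = 0}

/-- The class `W` of morphisms whose connecting morphisms in any triangle factor
through `T^⊥`. -/
def Wclass (T : Set C) {X Y : C} (f : X ⟶ Y) : Prop :=
  ∀ (Z : C) (r : Z ⟶ X) (s : Y ⟶ Z⟦(1:ℤ)⟧),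
    (Triangle.mk r f s ∈ distTriang C) →
      FactorsThruSet (rperp T) r ∧ FactorsThruSet (rperp T) s

/-- A subcategory `T` is rigid if `C(T, ΣT) = 0`. -/
def IsRigid (T : Set C) : Prop :=
  ∀ T' ∈ T, ∀ T'' ∈ T, ∀ (f : T' ⟶ (T'' : C)⟦(1:ℤ)⟧), f = 0

/-- A subcategory is contravariantly finite if every object admits a right approximation. -/
def ContravariantlyFinite (T : Set C) : Prop :=
  ∀ X : C, ∃ T₀ ∈ T, ∃ (p : T₀ ⟶ X), ∀ T' ∈ T, ∀ (u : T' ⟶ X), ∃ v : T' ⟶ T₀, v ≫ p = u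

/-- The subcategory `T * ΣT` of cones of morphisms of `T`. -/
def TstarSigmaT (T : Set C) : Set C :=
  {A | ∃ T₁ ∈ T, ∃ T₀ ∈ T, ∃ (a : T₁ ⟶ (T₀ : C)) (b : (T₀ : C) ⟶ A)
    (c : A ⟶ (T₁ : C)⟦(1:ℤ)⟧), Triangle.mk a b c ∈ distTriang C}
open ZeroObject

/-- A subcategory is closed under direct summands. -/
def ClosedUnderSummands (T : Set C) : Prop :=
  ∀ (X S : C) (i : X ⟶ S) (r : S ⟶ X), i ≫ r = 𝟙 X → S ∈ T → X ∈ T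

/-- A subcategory is strictly full (closed under isomorphisms). -/
def ClosedUnderIso (T : Set C) : Prop :=
  ∀ X Y : C, (X ≅ Y) → X ∈ T → Y ∈ T

/-- The cone of a right `T`-approximation lies in `T^⊥`, by rigidity. -/
lemma cone_of_approx_mem_rperp {T : Set C} (hrig : IsRigid T)
    {M T₁ Z' : C} (hT₁ : T₁ ∈ T) {t : T₁ ⟶ M} {q : M ⟶ Z'} {e : Z' ⟶ T₁⟦(1:ℤ)⟧}
    (hQ : Triangle.mk t q e ∈ distTriang C)
    (happ : ∀ T' ∈ T, ∀ (u : T' ⟶ M), ∃ v : T' ⟶ T₁, v ≫ t = u) :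
    Z' ∈ rperp T := by
  intro T'' hT'' φ
  obtain ⟨ψ, hψ⟩ := Triangle.coyoneda_exact₃ _ hQ φ (hrig T'' hT'' T₁ hT₁ _)
  obtain ⟨χ, hχ⟩ := happ T'' hT'' ψ
  have htq : t ≫ q = 0 := comp_distTriang_mor_zero₁₂ _ hQ
  simp only [Triangle.mk_mor₂] at hψ
  rw [hψ, ← hχ]
  erw [Category.assoc, htq, comp_zero]
  rfl

/-- `I^□ = J^□ ∩ W`: a morphism has the right lifting property with respect to all
morphisms `T' ⟶ B` (`T' ∈ T`, `B ∈ T * ΣT`) if and only if it is a weak equivalence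
having the right lifting property with respect to all `0 ⟶ ΣT'` (`T' ∈ T`). -/
theorem Irlp_iff_Jrlp_and_weq (T : Set C)
    (hcf : ContravariantlyFinite T) (hrig : IsRigid T)
    (hiso : ClosedUnderIso T) (hsumm : ClosedUnderSummands T)
    {X Y : C} (p : X ⟶ Y) :
    (∀ T' ∈ T, ∀ B ∈ TstarSigmaT T, ∀ (a : (T' : C) ⟶ (B : C)),
        HasLiftingProperty a p) ↔
      (Wclass T p ∧
        ∀ T' ∈ T, HasLiftingProperty (0 : (0 : C) ⟶ (T' : C)⟦(1:ℤ)⟧) p) := by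
  constructor
  · intro H
    -- the zero object belongs to `T`
    have h0 : (0 : C) ∈ T := by
      obtain ⟨T₀, hT₀, -⟩ := hcf 0
      exact hsumm 0 T₀ 0 0 ((isZero_zero C).eq_of_src _ _) hT₀
    -- `ΣT' ∈ T * ΣT`
    have hSig : ∀ T' ∈ T, (T' : C)⟦(1:ℤ)⟧ ∈ TstarSigmaT T := fun T' hT' =>
      ⟨T', hT', 0, h0, 0, 0, 𝟙 (T'⟦(1:ℤ)⟧), contractible_distinguished₂ T'⟩
    -- `T ⊆ T * ΣT`
    have hTmem : ∀ T₀ ∈ T, (T₀ : C) ∈ TstarSigmaT T := fun T₀ hT₀ =>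
      ⟨0, h0, T₀, hT₀, 0, 𝟙 T₀, 0, contractible_distinguished₁ T₀⟩
    -- injectivity of `C(T', p)`
    have inj : ∀ T' ∈ T, ∀ (f : (T' : C) ⟶ X), f ≫ p = 0 → f = 0 := by
      intro T' hT' f hf
      haveI := H T' hT' (T'⟦(1:ℤ)⟧) (hSig T' hT') (0 : T' ⟶ T'⟦(1:ℤ)⟧)
      have sq : CommSq f (0 : (T' : C) ⟶ T'⟦(1:ℤ)⟧) p (0 : T'⟦(1:ℤ)⟧ ⟶ Y) :=
        ⟨by simp [hf]⟩
      have := sq.fac_left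
      rw [zero_comp] at this
      exact this.symm
    -- surjectivity of `C(B, p)` for `B ∈ T * ΣT`
    have surj : ∀ B ∈ TstarSigmaT T, ∀ (g : B ⟶ Y), ∃ l : B ⟶ X, l ≫ p = g := by
      intro B hB g
      haveI := H 0 h0 B hB (0 : (0 : C) ⟶ B)
      have sq : CommSq (0 : (0 : C) ⟶ X) (0 : (0 : C) ⟶ B) p g := ⟨by simp⟩
      exact ⟨sq.lift, sq.fac_right⟩
    refine ⟨?_, fun T' hT' => H 0 h0 _ (hSig T' hT') 0⟩
    intro Z r s hTri
    constructor
    · -- `r` factors through `T^⊥`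
      obtain ⟨T₁, hT₁, t, happ⟩ := hcf Z
      obtain ⟨Z', q, e, hQ⟩ := distinguished_cocone_triangle t
      have hZ' : Z' ∈ rperp T := cone_of_approx_mem_rperp hrig hT₁ hQ (happ)
      have hrp : r ≫ p = 0 := comp_distTriang_mor_zero₁₂ _ hTri
      have htr : t ≫ r = 0 :=
        inj T₁ hT₁ (t ≫ r) (by rw [Category.assoc, hrp, comp_zero])
      obtain ⟨r', hr'⟩ := Triangle.yoneda_exact₂ _ hQ r htr
      exact ⟨Z', hZ', q, r', hr'⟩
    · -- `s` factors through `T^⊥`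
      obtain ⟨T₀, hT₀, t, happ⟩ := hcf Y
      obtain ⟨Y', q, e, hQ⟩ := distinguished_cocone_triangle t
      have hY' : Y' ∈ rperp T := cone_of_approx_mem_rperp hrig hT₀ hQ (happ)
      have hps : p ≫ s = 0 := comp_distTriang_mor_zero₂₃ _ hTri
      obtain ⟨l, hl⟩ := surj T₀ (hTmem T₀ hT₀) t
      have hts : t ≫ s = 0 := by rw [← hl, Category.assoc, hps, comp_zero]
      obtain ⟨s', hs'⟩ := Triangle.yoneda_exact₂ _ hQ s hts
      exact ⟨Y', hY', q, s', hs'⟩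
  · rintro ⟨hW, hJ⟩ T' hT' B hB a
    obtain ⟨T₁, hT₁, T₀, hT₀, b₁, b₀, b₂, hBtri⟩ := hB
    -- a distinguished triangle `Z ⟶ X ⟶ Y ⟶ ΣZ` on `p`
    obtain ⟨Q, w, δ, hQ⟩ := distinguished_cocone_triangle p
    set T2 := (Triangle.mk p w δ).invRotate with hT2
    have hTri : Triangle.mk T2.mor₁ p T2.mor₃ ∈ distTriang C :=
      inv_rot_of_distTriang _ hQ
    obtain ⟨⟨U, hU, u₁, u₂, hu⟩, V, hV, v₁, v₂, hv⟩ := hW _ T2.mor₁ T2.mor₃ hTri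
    constructor
    intro f g sq
    have hps : p ≫ T2.mor₃ = 0 := comp_distTriang_mor_zero₂₃ _ hTri
    -- every morphism `ΣT'' ⟶ Y` kills `T2.mor₃`
    have hA : ∀ T'' ∈ T, ∀ (ψ : (T'' : C)⟦(1:ℤ)⟧ ⟶ Y), ψ ≫ T2.mor₃ = 0 := by
      intro T'' hT'' ψ
      haveI := hJ T'' hT''
      have sq' : CommSq (0 : (0 : C) ⟶ X) (0 : (0 : C) ⟶ (T'' : C)⟦(1:ℤ)⟧) p ψ :=
        ⟨by simp⟩
      rw [← sq'.fac_right]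
      erw [Category.assoc, hps, comp_zero]
    -- `g ≫ T2.mor₃` is killed by `b₀`
    have hbg : b₀ ≫ g ≫ T2.mor₃ = 0 := by
      have h0' : (b₀ ≫ g) ≫ v₁ = 0 := hV T₀ hT₀ _
      rw [hv]
      simp only [← Category.assoc]
      rw [h0', zero_comp]
    -- hence factors through `b₂`
    obtain ⟨c, hc⟩ := Triangle.yoneda_exact₂ _ (rot_of_distTriang _ hBtri)
      (g ≫ T2.mor₃) hbg
    -- write `c` as a shift
    obtain ⟨c', hc'⟩ : ∃ c' : (T₁ : C) ⟶ Q⟦(-1:ℤ)⟧, c'⟦(1:ℤ)⟧' = c :=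
      ⟨(shiftFunctor C (1:ℤ)).preimage c, (shiftFunctor C (1:ℤ)).map_preimage c⟩
    have hc'r : c' ≫ T2.mor₁ = 0 := by
      rw [hu]
      erw [← Category.assoc, hU T₁ hT₁ (c' ≫ u₁), zero_comp]
    have hcr : c ≫ (T2.mor₁)⟦(1:ℤ)⟧' = 0 := by
      rw [← hc']
      erw [← Functor.map_comp, hc'r, Functor.map_zero]
      rfl
    obtain ⟨c'', hc''⟩ := Triangle.coyoneda_exact₁ _ hTri c hcr
    have hc0 : c = 0 := by
      rw [hc'']
      exact hA T₁ hT₁ c''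
    have hgs : g ≫ T2.mor₃ = 0 := hc.trans (by rw [hc0, comp_zero]; rfl)
    -- lift `g` through `p`
    obtain ⟨h₀, hh₀⟩ := Triangle.coyoneda_exact₃ _ hTri g hgs
    let h₁ : B ⟶ X := h₀
    have hh₁ : g = h₁ ≫ p := hh₀
    have hδp : (f - a ≫ h₁) ≫ p = 0 := by
      rw [Preadditive.sub_comp, Category.assoc, ← hh₁, sq.w, sub_self]
    -- correct the lift
    obtain ⟨e, he⟩ := Triangle.coyoneda_exact₂ _ hTri (f - a ≫ h₁) hδp
    have hδ : f - a ≫ h₁ = 0 := by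
      rw [he]
      erw [hu, ← Category.assoc, hU T' hT' (e ≫ u₁), zero_comp]
      rfl
    exact CommSq.HasLift.mk' ⟨h₁, (sub_eq_zero.mp hδ).symm, hh₁.symm⟩
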